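/- The sequence n ↦ n·((2·n - 1) - 2·√(n·(n-1))), for positive integers n, converges to 1/4 as n → ∞. Equivalently, with V(n) = (2·n - 1) - 2·√(n·(n-1)) the value of the Uniformed Patroller game with attack duration m = 2, and Ṽ(n) = 1/n the value of the corresponding non-uniformed game, the ratio V(n)/Ṽ(n) converges to 1/4. -/

import Mathlib

open Filter Topology

lemma key_eq (a : ℝ) (ha : 1 ≤ a) :
    a * ((2 * a - 1) - 2 * Real.sqrt (a * (a - 1))) =
      1 / (2 - 1 / a + 2 * Real.sqrt (1 - 1 / a)) := by
  have ha0 : 0 < a := lt_of_lt_of_le one_pos ha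
  have hinv : 1 / a ≤ 1 := by
    rw [div_le_one ha0]; exact ha
  have hnn : 0 ≤ 1 - 1 / a := by linarith
  set s := Real.sqrt (1 - 1 / a) with hs
  have hs0 : 0 ≤ s := Real.sqrt_nonneg _
  have hs2 : s ^ 2 = 1 - 1 / a := Real.sq_sqrt hnn
  have hsq : Real.sqrt (a * (a - 1)) = a * s := by
    rw [show a * (a - 1) = a ^ 2 * (1 - 1 / a) by field_simp,
      Real.sqrt_mul (sq_nonneg a), Real.sqrt_sq ha0.le]
  rw [hsq]
  have hden : 0 < 2 - 1 / a + 2 * s := by linarith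
  rw [eq_div_iff (ne_of_gt hden)]
  have ht : 1 / a = 1 - s ^ 2 := by linarith
  have h1 : a * (1 - s ^ 2) = 1 := by
    rw [← ht]; exact mul_one_div_cancel (ne_of_gt ha0)
  rw [ht]
  linear_combination (2 * a * (1 + s) + 1) * h1

/-- The ratio of the uniformed to non-uniformed game values for m = 2 tends to 1/4:
n·((2n - 1) - 2√(n(n-1))) → 1/4. -/
theorem stmt_17 :
    Tendsto (fun n : ℕ => (n : ℝ) *
        ((2 * (n : ℝ) - 1) - 2 * Real.sqrt ((n : ℝ) * ((n : ℝ) - 1))))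
      atTop (𝓝 (1 / 4)) := by
  have h1 : Tendsto (fun n : ℕ => 1 / (n : ℝ)) atTop (𝓝 0) :=
    tendsto_one_div_atTop_nhds_zero_nat
  have hcont : ContinuousAt (fun x : ℝ => 1 / (2 - x + 2 * Real.sqrt (1 - x))) 0 := by
    apply ContinuousAt.div
    · exact continuousAt_const
    · exact ((continuousAt_const.sub continuousAt_id).add
        (continuousAt_const.mul ((Real.continuous_sqrt.comp
          (continuous_const.sub continuous_id)).continuousAt)))
    · simp [Real.sqrt_one]
  have h2 : Tendsto (fun n : ℕ => 1 / (2 - 1 / (n : ℝ) + 2 * Real.sqrt (1 - 1 / (n : ℝ))))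
      atTop (𝓝 (1 / 4)) := by
    have := hcont.tendsto.comp h1
    norm_num [Real.sqrt_one, Function.comp, one_div] at this ⊢
    exact this
  apply h2.congr'
  filter_upwards [eventually_ge_atTop 1] with n hn
  exact (key_eq (n : ℝ) (by exact_mod_cast hn)).symm
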